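/- arXiv:1401.1000 — 2 statements merged into one kernel-verified Lean document; each statement's English description precedes it below -/
import Mathlib

section
/- Consider the Jacobi system dξ/dt = 1 + ξ², dθ/dt = −1 − ξ − θ + ξθ, and let F(ξ,θ) = ((1 + ξ²)/(ξ + θ)²)·exp(−2·arctan ξ) on the set G = {(ξ,θ) : ξ + θ ≠ 0}. Then F is differentiable on G and (1 + ξ²)·∂F/∂ξ(ξ,θ) + (−1 − ξ − θ + ξθ)·∂F/∂θ(ξ,θ) = 0 for all (ξ,θ) ∈ G; that is, F is a general autonomous integral of the system on any domain contained in G. -/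
/-- `F(ξ,θ) = ((1 + ξ²)/(ξ + θ)²)·exp(−2·arctan ξ)`. -/
noncomputable def F5 : ℝ × ℝ → ℝ :=
  fun p => ((1 + p.1 ^ 2) / (p.1 + p.2) ^ 2) * Real.exp (-2 * Real.arctan p.1)

/-- `F` is a general autonomous integral of the Jacobi system
`dξ/dt = 1 + ξ²`, `dθ/dt = −1 − ξ − θ + ξθ` on `G = {(ξ,θ) : ξ + θ ≠ 0}`. -/
theorem F5_general_autonomous_integral :
    ∀ p : ℝ × ℝ, p.1 + p.2 ≠ 0 →
      DifferentiableAt ℝ F5 p ∧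
      (1 + p.1 ^ 2) * fderiv ℝ F5 p (1, 0) +
        (-1 - p.1 - p.2 + p.1 * p.2) * fderiv ℝ F5 p (0, 1) = 0 := by
  rintro ⟨x, y⟩ h
  have hvne : ((x + y) ^ 2 : ℝ) ≠ 0 := pow_ne_zero _ h
  have hx2 : (1 + x ^ 2 : ℝ) ≠ 0 := by positivity
  have hfst : HasFDerivAt (fun p : ℝ × ℝ => p.1) (ContinuousLinearMap.fst ℝ ℝ ℝ) (x, y) :=
    hasFDerivAt_fst
  have hsnd : HasFDerivAt (fun p : ℝ × ℝ => p.2) (ContinuousLinearMap.snd ℝ ℝ ℝ) (x, y) :=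
    hasFDerivAt_snd
  have hupow : HasFDerivAt (fun p : ℝ × ℝ => p.1 ^ 2)
      ((((2 : ℕ) : ℝ) * x ^ 1) • ContinuousLinearMap.fst ℝ ℝ ℝ) (x, y) :=
    by exact (hasDerivAt_pow 2 x).comp_hasFDerivAt (x, y) hfst
  have hu : HasFDerivAt (fun p : ℝ × ℝ => 1 + p.1 ^ 2)
      (0 + (((2 : ℕ) : ℝ) * x ^ 1) • ContinuousLinearMap.fst ℝ ℝ ℝ) (x, y) :=
    (hasFDerivAt_const (1 : ℝ) ((x, y) : ℝ × ℝ)).add hupow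
  have hv : HasFDerivAt (fun p : ℝ × ℝ => (p.1 + p.2) ^ 2)
      ((((2 : ℕ) : ℝ) * (x + y) ^ 1) •
        (ContinuousLinearMap.fst ℝ ℝ ℝ + ContinuousLinearMap.snd ℝ ℝ ℝ)) (x, y) :=
    by exact (hasDerivAt_pow 2 (x + y)).comp_hasFDerivAt (x, y) (hfst.add hsnd)
  have hvinv : HasFDerivAt (fun p : ℝ × ℝ => ((p.1 + p.2) ^ 2)⁻¹)
      ((-(((x + y) ^ 2) ^ 2)⁻¹) • ((((2 : ℕ) : ℝ) * (x + y) ^ 1) •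
        (ContinuousLinearMap.fst ℝ ℝ ℝ + ContinuousLinearMap.snd ℝ ℝ ℝ))) (x, y) :=
    (hasDerivAt_inv hvne).comp_hasFDerivAt (x, y) hv
  have ha : HasDerivAt (fun t : ℝ => Real.exp (-2 * Real.arctan t))
      (Real.exp (-2 * Real.arctan x) * (-2 * (1 / (1 + x ^ 2)))) x := by
    have h1 : HasDerivAt (fun t : ℝ => -2 * Real.arctan t)
        (-2 * (1 / (1 + x ^ 2))) x := (Real.hasDerivAt_arctan x).const_mul (-2)
    exact (Real.hasDerivAt_exp (-2 * Real.arctan x)).comp x h1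
  have hw : HasFDerivAt (fun p : ℝ × ℝ => Real.exp (-2 * Real.arctan p.1))
      ((Real.exp (-2 * Real.arctan x) * (-2 * (1 / (1 + x ^ 2)))) •
        ContinuousLinearMap.fst ℝ ℝ ℝ) (x, y) :=
    by exact ha.comp_hasFDerivAt (x, y) hfst
  have hF : F5 = fun p : ℝ × ℝ =>
      ((1 + p.1 ^ 2) * ((p.1 + p.2) ^ 2)⁻¹) * Real.exp (-2 * Real.arctan p.1) := by
    funext p
    simp [F5, div_eq_mul_inv]
  have H := (hu.mul hvinv).mul hw
  replace H : HasFDerivAt (fun p : ℝ × ℝ =>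
      ((1 + p.1 ^ 2) * ((p.1 + p.2) ^ 2)⁻¹) * Real.exp (-2 * Real.arctan p.1)) _ (x, y) := H
  rw [← hF] at H
  refine ⟨H.differentiableAt, ?_⟩
  rw [H.fderiv]
  simp
  field_simp
  ring
end

section
/- Consider the Darboux system dx/dt = −y + x³, dy/dt = x(1 + xy), and set F₁(t,x,y) = −t + arctan(y/x) and F₂(t,x,y) = t + (1 + xy)/(x² + y²) on the set D = {(t,x,y) : x ≠ 0}. Then F₁ and F₂ are differentiable on D and satisfy ∂Fᵢ/∂t(t,x,y) + (−y + x³)·∂Fᵢ/∂x(t,x,y) + x(1 + xy)·∂Fᵢ/∂y(t,x,y) = 0 for all (t,x,y) ∈ D and i = 1, 2; that is, F₁ and F₂ are first integrals of the system on any domain contained in D. -/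
/-- `F₁(t,x,y) = −t + arctan(y/x)`. -/
noncomputable def F13₁ : ℝ × ℝ × ℝ → ℝ :=
  fun p => -p.1 + Real.arctan (p.2.2 / p.2.1)

/-- `F₂(t,x,y) = t + (1 + xy)/(x² + y²)`. -/
noncomputable def F13₂ : ℝ × ℝ × ℝ → ℝ :=
  fun p => p.1 + (1 + p.2.1 * p.2.2) / (p.2.1 ^ 2 + p.2.2 ^ 2)

/-- `F₁` and `F₂` are first integrals of the Darboux system
`dx/dt = −y + x³`, `dy/dt = x(1 + xy)` on `D = {(t,x,y) : x ≠ 0}`. -/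
theorem F13_first_integrals :
    ∀ p : ℝ × ℝ × ℝ, p.2.1 ≠ 0 →
      DifferentiableAt ℝ F13₁ p ∧ DifferentiableAt ℝ F13₂ p ∧
      fderiv ℝ F13₁ p (1, 0, 0) +
        (-p.2.2 + p.2.1 ^ 3) * fderiv ℝ F13₁ p (0, 1, 0) +
        p.2.1 * (1 + p.2.1 * p.2.2) * fderiv ℝ F13₁ p (0, 0, 1) = 0 ∧
      fderiv ℝ F13₂ p (1, 0, 0) +
        (-p.2.2 + p.2.1 ^ 3) * fderiv ℝ F13₂ p (0, 1, 0) +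
        p.2.1 * (1 + p.2.1 * p.2.2) * fderiv ℝ F13₂ p (0, 0, 1) = 0 := by
  rintro ⟨t, x, y⟩ hx
  simp only at hx
  have hx2 : (0:ℝ) < x ^ 2 := by positivity
  have hden : x ^ 2 + y ^ 2 ≠ 0 := by positivity
  -- basic derivatives
  have hT : HasFDerivAt (fun p : ℝ × ℝ × ℝ => p.1)
      (ContinuousLinearMap.fst ℝ ℝ (ℝ × ℝ)) (t, x, y) := hasFDerivAt_fst
  have hX : HasFDerivAt (fun p : ℝ × ℝ × ℝ => p.2.1)
      ((ContinuousLinearMap.fst ℝ ℝ ℝ).comp (ContinuousLinearMap.snd ℝ ℝ (ℝ × ℝ)))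
      (t, x, y) := hasFDerivAt_fst.comp _ hasFDerivAt_snd
  have hY : HasFDerivAt (fun p : ℝ × ℝ × ℝ => p.2.2)
      ((ContinuousLinearMap.snd ℝ ℝ ℝ).comp (ContinuousLinearMap.snd ℝ ℝ (ℝ × ℝ)))
      (t, x, y) := hasFDerivAt_snd.comp _ hasFDerivAt_snd
  have hInvX : HasFDerivAt (fun p : ℝ × ℝ × ℝ => (p.2.1)⁻¹) _ (t, x, y) :=
    (hasDerivAt_inv hx).comp_hasFDerivAt (t, x, y) hX
  have hQ : HasFDerivAt (fun p : ℝ × ℝ × ℝ => p.2.2 * (p.2.1)⁻¹) _ (t, x, y) := hY.mul hInvX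
  have hA :=
    (Real.hasDerivAt_arctan (y * x⁻¹)).comp_hasFDerivAt (t, x, y) hQ
  have e1 : F13₁ =ᶠ[nhds ((t, x, y) : ℝ × ℝ × ℝ)]
      (fun p : ℝ × ℝ × ℝ => -p.1 + Real.arctan (p.2.2 * (p.2.1)⁻¹)) :=
    Filter.Eventually.of_forall fun p => by simp [F13₁, div_eq_mul_inv]
  have hF1 := (hT.neg.add hA).congr_of_eventuallyEq e1
  have hN := (hasFDerivAt_const (1:ℝ) ((t, x, y) : ℝ × ℝ × ℝ)).add (hX.mul hY)
  have hD : HasFDerivAt (fun p : ℝ × ℝ × ℝ => p.2.1 * p.2.1 + p.2.2 * p.2.2) _ (t, x, y) :=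
    (hX.mul hX).add (hY.mul hY)
  have hden' : x * x + y * y ≠ 0 := by rw [← pow_two, ← pow_two]; exact hden
  have hInvD :=
    (hasDerivAt_inv hden').comp_hasFDerivAt (t, x, y) hD
  have e2 : F13₂ =ᶠ[nhds ((t, x, y) : ℝ × ℝ × ℝ)]
      (fun p : ℝ × ℝ × ℝ => p.1 + (1 + p.2.1 * p.2.2) * (p.2.1 * p.2.1 + p.2.2 * p.2.2)⁻¹) :=
    Filter.Eventually.of_forall fun p => by simp [F13₂, div_eq_mul_inv, pow_two]
  have hF2 := (hT.add (hN.mul hInvD)).congr_of_eventuallyEq e2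
  refine ⟨hF1.differentiableAt, hF2.differentiableAt, ?_, ?_⟩
  · rw [hF1.fderiv]
    simp only [ContinuousLinearMap.add_apply, ContinuousLinearMap.neg_apply,
      ContinuousLinearMap.smul_apply, ContinuousLinearMap.sub_apply,
      ContinuousLinearMap.comp_apply, ContinuousLinearMap.coe_fst',
      ContinuousLinearMap.coe_snd', smul_eq_mul]
    have h1 : 1 + (y * x⁻¹) ^ 2 ≠ 0 := by positivity
    field_simp
    ring
  · rw [hF2.fderiv]
    simp only [ContinuousLinearMap.add_apply, ContinuousLinearMap.neg_apply,
      ContinuousLinearMap.smul_apply, ContinuousLinearMap.sub_apply,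
      ContinuousLinearMap.comp_apply, ContinuousLinearMap.coe_fst',
      ContinuousLinearMap.coe_snd', ContinuousLinearMap.zero_apply, smul_eq_mul,
      Function.comp_apply, Pi.add_apply, Pi.mul_apply]
    field_simp
    ring
end
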